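/- arXiv:1407.1384 — 2 statements merged into one kernel-verified Lean document; each statement's English description precedes it below -/
import Mathlib

section
/- For any nonnegative parameters κ₁, κ₂, the endpoints u^± = 1/2 + (κ₁² − κ₂² ± 4√((1+κ₁)(1+κ₂)(1+κ₁+κ₂))) / (2(2+κ₁+κ₂)²) satisfy 0 ≤ u⁻ < u⁺ ≤ 1, with u⁻ = 0 if and only if κ₁ = 0 and u⁺ = 1 if and only if κ₂ = 0. -/
/-- Properties of the support endpoints `u^±` of the Kesten–McKay distribution:
`0 ≤ u⁻ < u⁺ ≤ 1`, with `u⁻ = 0 ↔ κ₁ = 0` and `u⁺ = 1 ↔ κ₂ = 0`. -/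
theorem kestenMcKay_endpoints (κ₁ κ₂ : ℝ) (h1 : 0 ≤ κ₁) (h2 : 0 ≤ κ₂) :
    (0 ≤ 1/2 + (κ₁ ^ 2 - κ₂ ^ 2
        - 4 * Real.sqrt ((1 + κ₁) * (1 + κ₂) * (1 + κ₁ + κ₂))) / (2 * (2 + κ₁ + κ₂) ^ 2)) ∧
    (1/2 + (κ₁ ^ 2 - κ₂ ^ 2
        - 4 * Real.sqrt ((1 + κ₁) * (1 + κ₂) * (1 + κ₁ + κ₂))) / (2 * (2 + κ₁ + κ₂) ^ 2)
      < 1/2 + (κ₁ ^ 2 - κ₂ ^ 2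
        + 4 * Real.sqrt ((1 + κ₁) * (1 + κ₂) * (1 + κ₁ + κ₂))) / (2 * (2 + κ₁ + κ₂) ^ 2)) ∧
    (1/2 + (κ₁ ^ 2 - κ₂ ^ 2
        + 4 * Real.sqrt ((1 + κ₁) * (1 + κ₂) * (1 + κ₁ + κ₂))) / (2 * (2 + κ₁ + κ₂) ^ 2) ≤ 1) ∧
    ((1/2 + (κ₁ ^ 2 - κ₂ ^ 2
        - 4 * Real.sqrt ((1 + κ₁) * (1 + κ₂) * (1 + κ₁ + κ₂))) / (2 * (2 + κ₁ + κ₂) ^ 2) = 0)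
      ↔ κ₁ = 0) ∧
    ((1/2 + (κ₁ ^ 2 - κ₂ ^ 2
        + 4 * Real.sqrt ((1 + κ₁) * (1 + κ₂) * (1 + κ₁ + κ₂))) / (2 * (2 + κ₁ + κ₂) ^ 2) = 1)
      ↔ κ₂ = 0) := by
  set s := Real.sqrt ((1 + κ₁) * (1 + κ₂) * (1 + κ₁ + κ₂)) with hsdef
  have hP : (0:ℝ) < (1 + κ₁) * (1 + κ₂) * (1 + κ₁ + κ₂) := by positivity
  have hs0 : 0 < s := Real.sqrt_pos.mpr hP
  have hs2 : s ^ 2 = (1 + κ₁) * (1 + κ₂) * (1 + κ₁ + κ₂) := Real.sq_sqrt hP.le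
  have hD : (0:ℝ) < 2 * (2 + κ₁ + κ₂) ^ 2 := by positivity
  have hDne : (2 * (2 + κ₁ + κ₂) ^ 2 : ℝ) ≠ 0 := ne_of_gt hD
  -- AM-GM keys
  have hkey1 : 4 * s ≤ (2 + κ₁ + κ₂) ^ 2 + κ₁ ^ 2 - κ₂ ^ 2 := by
    nlinarith [hs2, hs0.le, sq_nonneg ((1+κ₁)*(1+κ₁+κ₂) - (1+κ₂)),
      sq_nonneg ((1+κ₁)*(1+κ₁+κ₂) + (1+κ₂) - 2*s)]
  have hkey2 : 4 * s ≤ (2 + κ₁ + κ₂) ^ 2 - κ₁ ^ 2 + κ₂ ^ 2 := by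
    nlinarith [hs2, hs0.le, sq_nonneg ((1+κ₂)*(1+κ₁+κ₂) - (1+κ₁)),
      sq_nonneg ((1+κ₂)*(1+κ₁+κ₂) + (1+κ₁) - 2*s)]
  have e1 : 1/2 + (κ₁ ^ 2 - κ₂ ^ 2 - 4 * s) / (2 * (2 + κ₁ + κ₂) ^ 2)
      = ((2 + κ₁ + κ₂) ^ 2 + κ₁ ^ 2 - κ₂ ^ 2 - 4 * s) / (2 * (2 + κ₁ + κ₂) ^ 2) := by
    field_simp; ring
  have e2 : 1/2 + (κ₁ ^ 2 - κ₂ ^ 2 + 4 * s) / (2 * (2 + κ₁ + κ₂) ^ 2)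
      = ((2 + κ₁ + κ₂) ^ 2 + κ₁ ^ 2 - κ₂ ^ 2 + 4 * s) / (2 * (2 + κ₁ + κ₂) ^ 2) := by
    field_simp; ring
  refine ⟨?_, ?_, ?_, ?_, ?_⟩
  · rw [e1]
    apply div_nonneg _ hD.le
    linarith
  · apply add_lt_add_right
    apply div_lt_div_of_pos_right _ hD
    linarith
  · rw [e2, div_le_one hD]
    linarith
  · rw [e1]
    constructor
    · intro h
      have hnum : (2 + κ₁ + κ₂) ^ 2 + κ₁ ^ 2 - κ₂ ^ 2 - 4 * s = 0 := by
        rcases div_eq_zero_iff.mp h with h' | h'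
        · exact h'
        · exact absurd h' hDne
      have hXY : (1+κ₁)*(1+κ₁+κ₂) + (1+κ₂) = 2*s := by linear_combination hnum / 2
      have hsq : (κ₁ * (2+κ₁+κ₂)) ^ 2 = 0 := by
        linear_combination ((1+κ₁)*(1+κ₁+κ₂) + (1+κ₂) + 2*s) * hXY + 4 * hs2
      have := pow_eq_zero_iff (n := 2) (by norm_num) |>.mp hsq
      rcases mul_eq_zero.mp this with h' | h'
      · exact h'
      · nlinarith
    · intro h
      subst h
      have hs' : s = 1 + κ₂ := by
        rw [hsdef, show (1 + (0:ℝ)) * (1 + κ₂) * (1 + 0 + κ₂) = (1+κ₂)^2 by ring,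
          Real.sqrt_sq (by linarith)]
      rw [hs']
      rw [div_eq_zero_iff]
      left; ring
  · rw [e2]
    constructor
    · intro h
      rw [div_eq_one_iff_eq hDne] at h
      have hnum : (2 + κ₁ + κ₂) ^ 2 - κ₁ ^ 2 + κ₂ ^ 2 - 4 * s = 0 := by linarith
      have hXY : (1+κ₂)*(1+κ₁+κ₂) + (1+κ₁) = 2*s := by linear_combination hnum / 2
      have hsq : (κ₂ * (2+κ₁+κ₂)) ^ 2 = 0 := by
        linear_combination ((1+κ₂)*(1+κ₁+κ₂) + (1+κ₁) + 2*s) * hXY + 4 * hs2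
      have := pow_eq_zero_iff (n := 2) (by norm_num) |>.mp hsq
      rcases mul_eq_zero.mp this with h' | h'
      · exact h'
      · nlinarith
    · intro h
      subst h
      have hs' : s = 1 + κ₁ := by
        rw [hsdef, show (1 + κ₁) * (1 + (0:ℝ)) * (1 + κ₁ + 0) = (1+κ₁)^2 by ring,
          Real.sqrt_sq (by linarith)]
      rw [hs', div_eq_one_iff_eq hDne]
      ring
end

section
/- Let μ_V be a probability measure and μ a positive finite measure with Lebesgue decomposition dμ = h dμ_V + dμ_s (h ≥ 0 measurable, μ_s ⊥ μ_V). Suppose h > 0 μ_V-a.e. and μ_s = 0 defines the reference point; then for the functional Λ*(ν) = −∫ log h_ν dμ_V − 1 + ν(ℝ) (with dν = h_ν dμ_V + dν_s), and f = 1 − h⁻¹ (assumed bounded), one has Λ*(μ) − ∫ f dμ < Λ*(ν) − ∫ f dν for every finite measure ν ≠ μ with Λ*(ν) < ∞. Equivalently: ∫ log(h/h_ν) dμ_V ≥ ∫ dμ_V − ∫ h⁻¹ dν, with equality only if h_ν = h μ_V-a.e. and ν_s = 0. -/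
open MeasureTheory

/-- Strict convexity (exposed point) of the rate functional: with `dμ = h dμ_V`,
`dν = h_ν dμ_V + dν_s` (`ν_s ⊥ μ_V`), `h > 0`,
`∫ log(h/h_ν) dμ_V ≥ 1 - (∫ h⁻¹ h_ν dμ_V + ∫ h⁻¹ dν_s)`, with equality only if
`h_ν = h` μ_V-a.e. and `ν_s = 0`. -/
theorem exposed_point_inequality (μV : Measure ℝ) [IsProbabilityMeasure μV]
    (h hν : ℝ → ℝ) (νs : Measure ℝ) [IsFiniteMeasure νs]
    (hmeas : Measurable h) (hνmeas : Measurable hν)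
    (hpos : ∀ x, 0 < h x) (hνpos : ∀ᵐ x ∂μV, 0 < hν x)
    (hsing : MeasureTheory.Measure.MutuallySingular νs μV)
    (hint : Integrable (fun x => Real.log (h x / hν x)) μV)
    (hint2 : Integrable (fun x => (h x)⁻¹ * hν x) μV)
    (hint3 : Integrable (fun x => (h x)⁻¹) νs) :
    (∫ x, Real.log (h x / hν x) ∂μV
        ≥ 1 - ((∫ x, (h x)⁻¹ * hν x ∂μV) + ∫ x, (h x)⁻¹ ∂νs)) ∧
    ((∫ x, Real.log (h x / hν x) ∂μV
        = 1 - ((∫ x, (h x)⁻¹ * hν x ∂μV) + ∫ x, (h x)⁻¹ ∂νs))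
      → (h =ᵐ[μV] hν ∧ νs = 0)) := by
  set g : ℝ → ℝ := fun x => Real.log (h x / hν x) - (1 - (h x)⁻¹ * hν x) with hg
  have hgint : Integrable g μV := by
    apply (hint.sub (integrable_const 1)).add hint2 |>.congr
    filter_upwards with x
    simp [hg]; ring
  have hgnn : ∀ᵐ x ∂μV, 0 ≤ g x := by
    filter_upwards [hνpos] with x hx
    have h1 : Real.log (hν x / h x) ≤ hν x / h x - 1 :=
      Real.log_le_sub_one_of_pos (div_pos hx (hpos x))
    have h2 : Real.log (hν x / h x) = - Real.log (h x / hν x) := by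
      rw [← Real.log_inv, inv_div]
    have h3 : hν x / h x = (h x)⁻¹ * hν x := by ring
    simp only [hg]
    nlinarith
  have hgI : 0 ≤ ∫ x, g x ∂μV := integral_nonneg_of_ae hgnn
  have hsI : 0 ≤ ∫ x, (h x)⁻¹ ∂νs :=
    integral_nonneg fun x => (inv_pos.mpr (hpos x)).le
  have hgeq : ∫ x, g x ∂μV
      = (∫ x, Real.log (h x / hν x) ∂μV) - 1 + ∫ x, (h x)⁻¹ * hν x ∂μV := by
    have e1 : ∫ x, g x ∂μV = ∫ x, (Real.log (h x / hν x) - 1 + (h x)⁻¹ * hν x) ∂μV :=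
      integral_congr_ae (Filter.Eventually.of_forall fun x => by simp [hg]; ring)
    have i1 : Integrable (fun x => Real.log (h x / hν x) - 1) μV :=
      hint.sub (integrable_const 1)
    rw [e1, integral_add i1 hint2, integral_sub hint (integrable_const 1), integral_const]
    simp
  constructor
  · linarith
  · intro heq
    have hz1 : ∫ x, g x ∂μV = 0 := by linarith
    have hz2 : ∫ x, (h x)⁻¹ ∂νs = 0 := by linarith
    constructor
    · have hg0 : g =ᵐ[μV] 0 :=
        (integral_eq_zero_iff_of_nonneg_ae hgnn hgint).mp hz1
      filter_upwards [hg0, hνpos] with x hx hxp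
      have hx' : Real.log (h x / hν x) - (1 - (h x)⁻¹ * hν x) = 0 := hx
      have h1 : Real.log (h x / hν x) = 1 - (h x)⁻¹ * hν x := by linarith
      by_contra hne
      have h2 : Real.log (hν x / h x) < hν x / h x - 1 := by
        have hdne' : hν x / h x ≠ 1 := by
          intro hd
          exact hne ((div_eq_one_iff_eq (hpos x).ne').mp hd).symm
        exact Real.log_lt_sub_one_of_pos (div_pos hxp (hpos x)) hdne'
      have h3 : Real.log (hν x / h x) = - Real.log (h x / hν x) := by
        rw [← Real.log_inv, inv_div]
      have h4 : hν x / h x = (h x)⁻¹ * hν x := by ring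
      rw [h3, h4, h1] at h2
      linarith
    · have hinv0 : (fun x => (h x)⁻¹) =ᵐ[νs] 0 :=
        (integral_eq_zero_iff_of_nonneg_ae
          (Filter.Eventually.of_forall fun x => (inv_pos.mpr (hpos x)).le) hint3).mp hz2
      have : νs {x | ¬ ((h x)⁻¹ = 0)} = 0 := hinv0
      have hset : {x | ¬ ((h x)⁻¹ = 0)} = Set.univ := by
        ext x
        simp [inv_eq_zero, (hpos x).ne']
      have huniv : νs Set.univ = 0 := hset ▸ this
      exact Measure.measure_univ_eq_zero.mp huniv
end
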